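/- arXiv:1901.00605 — 3 statements merged into one kernel-verified Lean document; each statement's English description precedes it below -/
import Mathlib

section
/- Let $s$ be a positive integer and $k > 2$ an integer. Set $D = ((1+2s)^k - s)^2 - 2(1+2s)^k$. Then $D$ is a positive non-square integer and the fundamental period of the regular continued fraction expansion of $\sqrt{D}$ has length $8k - 4$. -/
/-- The Gauss-map iterates of `x`: `cfX x 0 = x` and
`cfX x (n+1) = 1 / (cfX x n - ⌊cfX x n⌋)`. -/
noncomputable def cfX (x : ℝ) : ℕ → ℝ
  | 0 => x
  | n + 1 => (cfX x n - ⌊cfX x n⌋)⁻¹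

/-- The `n`-th partial quotient of the regular continued fraction of `x`. -/
noncomputable def cfA (x : ℝ) (n : ℕ) : ℤ := ⌊cfX x n⌋

/-- `p` is a period (from index `1` on) of the continued fraction expansion of `x`. -/
def cfPeriod (x : ℝ) (p : ℕ) : Prop :=
  0 < p ∧ ∀ n, 1 ≤ n → cfA x (n + p) = cfA x n

lemma cfX_succ (x : ℝ) (n : ℕ) : cfX x (n+1) = (cfX x n - ⌊cfX x n⌋)⁻¹ := rfl

lemma cfX_add (x : ℝ) (m n : ℕ) : cfX x (m + n) = cfX (cfX x m) n := by
  induction n with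
  | zero => rfl
  | succ n ih => rw [← Nat.add_assoc, cfX_succ, ih, cfX_succ]

lemma irrational_cfX {x : ℝ} (hx : Irrational x) (n : ℕ) : Irrational (cfX x n) := by
  induction n with
  | zero => exact hx
  | succ n ih =>
    rw [cfX_succ]
    exact Irrational.inv (Irrational.sub_intCast ih _)

lemma one_lt_cfX {x : ℝ} (hx : Irrational x) (n : ℕ) : 1 < cfX x (n+1) := by
  have hirr := irrational_cfX hx n
  rw [cfX_succ]
  have h1 : 0 < cfX x n - ⌊cfX x n⌋ := by
    have := Int.floor_le (cfX x n)
    have hne : (⌊cfX x n⌋ : ℝ) ≠ cfX x n := (hirr.ne_int _).symm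
    cases lt_or_eq_of_le this with
    | inl h => linarith
    | inr h => exact absurd h hne
  have h2 : cfX x n - ⌊cfX x n⌋ < 1 := by
    have := Int.lt_floor_add_one (cfX x n)
    linarith
  exact (one_lt_inv₀ h1).mpr h2

lemma cfX_eq_floor_add_inv {x : ℝ} (hx : Irrational x) (n : ℕ) :
    cfX x n = ⌊cfX x n⌋ + (cfX x (n+1))⁻¹ := by
  have h1 : 1 < cfX x (n+1) := one_lt_cfX hx n
  rw [cfX_succ, inv_inv]
  ring

lemma pair_prod_lt {x : ℝ} (hx : Irrational x) (n : ℕ) : 2 < cfX x (n+1) * cfX x (n+2) := by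
  have h2 : 1 < cfX x (n+2) := one_lt_cfX hx (n+1)
  have h1 : (1:ℝ) ≤ ⌊cfX x (n+1)⌋ := by
    have hx1 : (1:ℤ) ≤ ⌊cfX x (n+1)⌋ := Int.le_floor.mpr (by push_cast; exact (one_lt_cfX hx n).le)
    exact_mod_cast hx1
  have heq : cfX x (n+1) = ⌊cfX x (n+1)⌋ + (cfX x (n+2))⁻¹ := cfX_eq_floor_add_inv hx (n+1)
  have hpos : 0 < cfX x (n+2) := by linarith
  have hb : cfX x (n+2) ≠ 0 := ne_of_gt hpos
  have hkey : cfX x (n+1) * cfX x (n+2) = ⌊cfX x (n+1)⌋ * cfX x (n+2) + 1 := by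
    conv_lhs => rw [heq]
    field_simp
  nlinarith

lemma cf_unique {y z : ℝ} (hy : Irrational y) (hz : Irrational z)
    (h : ∀ n, ⌊cfX y n⌋ = ⌊cfX z n⌋) : y = z := by
  have key : ∀ n, cfX y n - cfX z n = (cfX z (n+1) - cfX y (n+1)) / (cfX y (n+1) * cfX z (n+1)) := by
    intro n
    have hy1 : 1 < cfX y (n+1) := one_lt_cfX hy n
    have hz1 : 1 < cfX z (n+1) := one_lt_cfX hz n
    rw [cfX_eq_floor_add_inv hy n, cfX_eq_floor_add_inv hz n, h n]
    field_simp
    ring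
  have habs1 : ∀ n, |cfX y n - cfX z n| < 1 := by
    intro n
    have h1 := Int.floor_le (cfX y n)
    have h2 := Int.lt_floor_add_one (cfX y n)
    have h3 := Int.floor_le (cfX z n)
    have h4 := Int.lt_floor_add_one (cfX z n)
    rw [h n] at h1 h2
    rw [abs_lt]; constructor <;> linarith
  have hstep2 : ∀ n, |cfX y n - cfX z n| ≤ |cfX y (n+2) - cfX z (n+2)| / 4 := by
    intro n
    have e1 := key n
    have e2 := key (n+1)
    rw [show n+1+1 = n+2 from rfl] at e2
    have p1 : 0 < cfX y (n+1) := by linarith [one_lt_cfX hy n]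
    have p2 : 0 < cfX z (n+1) := by linarith [one_lt_cfX hz n]
    have p3 : 0 < cfX y (n+2) := by linarith [one_lt_cfX hy (n+1)]
    have p4 : 0 < cfX z (n+2) := by linarith [one_lt_cfX hz (n+1)]
    have hy2 := pair_prod_lt hy n
    have hz2 := pair_prod_lt hz n
    have heq : cfX y n - cfX z n =
        (cfX y (n+2) - cfX z (n+2)) / ((cfX y (n+1) * cfX z (n+1)) * (cfX y (n+2) * cfX z (n+2))) := by
      rw [e1, show cfX z (n+1) - cfX y (n+1) = -(cfX y (n+1) - cfX z (n+1)) by ring, e2]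
      field_simp
      ring_nf
    have hden : 0 < (cfX y (n+1) * cfX z (n+1)) * (cfX y (n+2) * cfX z (n+2)) :=
      mul_pos (mul_pos p1 p2) (mul_pos p3 p4)
    rw [heq, abs_div, abs_of_pos hden]
    have h4 : (4:ℝ) ≤ (cfX y (n+1) * cfX z (n+1)) * (cfX y (n+2) * cfX z (n+2)) := by
      nlinarith [mul_pos p1 p3, mul_pos p2 p4]
    gcongr
  -- iterate: |y1 - z1| ≤ (1/4)^m
  have hiter : ∀ m n, |cfX y n - cfX z n| ≤ (1/4)^m := by
    intro m
    induction m with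
    | zero => intro n; simpa using (habs1 n).le
    | succ m ih =>
      intro n
      calc |cfX y n - cfX z n| ≤ |cfX y (n+2) - cfX z (n+2)| / 4 := hstep2 n
        _ ≤ (1/4)^m / 4 := by gcongr; exact ih (n+2)
        _ = (1/4)^(m+1) := by ring
  have hzero : y - z = 0 := by
    have h0 : |y - z| = 0 := by
      by_contra hne
      have hpos : 0 < |y - z| := lt_of_le_of_ne (abs_nonneg _) (Ne.symm hne)
      obtain ⟨m, hm⟩ := exists_pow_lt_of_lt_one hpos (by norm_num : (1/4:ℝ) < 1)
      exact absurd (hiter m 0) (by simpa [cfX] using not_le.mpr hm)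
    exact abs_eq_zero.mp h0
  linarith [hzero]

lemma floor_sqrt {D a0 : ℤ} (h1 : 0 ≤ a0) (h2 : a0^2 < D) (h3 : D < (a0+1)^2) :
    ⌊Real.sqrt D⌋ = a0 := by
  have hDpos : (0:ℤ) < D := lt_of_le_of_lt (sq_nonneg _) h2
  have hD : (0:ℝ) ≤ (D:ℝ) := by exact_mod_cast hDpos.le
  have hs := Real.sq_sqrt hD
  have hsn := Real.sqrt_nonneg (D:ℝ)
  rw [Int.floor_eq_iff]
  constructor
  · have h2' : ((a0:ℝ))^2 < (D:ℝ) := by exact_mod_cast h2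
    nlinarith
  · have h3' : (D:ℝ) < ((a0:ℝ)+1)^2 := by exact_mod_cast h3
    have ha0 : (0:ℝ) ≤ (a0:ℝ) := by exact_mod_cast h1
    push_cast
    nlinarith

lemma gauss_step {x : ℝ} {D P Q A P' Q' : ℤ}
    (hx : x = ((P : ℝ) + Real.sqrt D) / Q)
    (hQ : 0 < Q) (hA : P' = A * Q - P) (hB : Q * Q' = D - P'^2)
    (h0 : 0 ≤ P') (h1 : P'^2 < D) (h2 : D < (P' + Q)^2) :
    ⌊x⌋ = A ∧ (x - ⌊x⌋)⁻¹ = ((P' : ℝ) + Real.sqrt D) / Q' := by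
  set r := Real.sqrt D with hr
  have hDpos : (0:ℤ) < D := lt_of_le_of_lt (sq_nonneg _) h1
  have hrsq : r^2 = (D:ℝ) := Real.sq_sqrt (by exact_mod_cast hDpos.le)
  have hrpos : 0 < r := Real.sqrt_pos.mpr (by exact_mod_cast hDpos)
  have hP'r : (P' : ℝ) < r := by
    have : ((P':ℝ))^2 < (D:ℝ) := by exact_mod_cast h1
    nlinarith [Real.sqrt_nonneg (D:ℝ)]
  have hrPQ : r < (P' : ℝ) + Q := by
    have hc : (0:ℝ) < (P':ℝ) + Q := by
      have : (0:ℤ) < P' + Q := by linarith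
      exact_mod_cast this
    have : (D:ℝ) < ((P':ℝ) + Q)^2 := by exact_mod_cast h2
    nlinarith
  have hQR : (0:ℝ) < (Q:ℝ) := by exact_mod_cast hQ
  have hfloor : ⌊x⌋ = A := by
    rw [Int.floor_eq_iff]
    constructor
    · rw [hx, le_div_iff₀ hQR]
      have : (A:ℝ) * Q = (P':ℝ) + P := by push_cast [hA]; ring
      rw [this]; linarith
    · rw [hx, div_lt_iff₀ hQR]
      push_cast
      have : ((A:ℝ) + 1) * Q = (P':ℝ) + P + Q := by push_cast [hA]; ring
      rw [this]; push_cast; linarith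
  refine ⟨hfloor, ?_⟩
  rw [hfloor]
  have hxA : x - A = (r - P') / Q := by
    rw [hx]
    field_simp
    push_cast [hA]
    ring
  have hQ'pos : (0:ℤ) < Q' := by
    have hDP : (0:ℤ) < D - P'^2 := by linarith
    by_contra hneg
    push_neg at hneg
    nlinarith
  have hQ'R : (0:ℝ) < (Q':ℝ) := by exact_mod_cast hQ'pos
  have hrP' : (0:ℝ) < r - P' := by linarith
  rw [hxA]
  rw [inv_div]
  rw [div_eq_div_iff (ne_of_gt hrP') (ne_of_gt hQ'R)]
  have hBR : (Q:ℝ) * Q' = (D:ℝ) - (P':ℝ)^2 := by exact_mod_cast hB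
  nlinarith [hBR, hrsq]

namespace CF13

lemma Dlt (s N t : ℤ) (h0 : 0 < N) (hst : 0 ≤ N - s) (ht : N - s ≤ t) :
    (N-s)^2 - 2*N < t^2 := by nlinarith [mul_self_le_mul_self hst ht]

lemma arith0 (s a N : ℤ) (hs : 1 ≤ s) (ha : a = 2*s+1) (hN : a^3 ≤ N) :
    N-s-2 = (N-s-2)*1 - 0 ∧
    1 * (2*N-4*s-4) = ((N-s)^2-2*N) - (N-s-2)^2 ∧
    0 ≤ N-s-2 ∧ (N-s-2)^2 < (N-s)^2-2*N ∧ ((N-s)^2-2*N) < (N-s-2+1)^2 := by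
  subst ha
  have h2 : s ≤ s*s := by nlinarith
  have h3 : s*s ≤ s*s*s := by nlinarith
  refine ⟨by ring, by ring, by nlinarith, by nlinarith, by nlinarith⟩

lemma arith1 (s a N : ℤ) (hs : 1 ≤ s) (ha : a = 2*s+1) (hN : a^3 ≤ N) :
    N-3*s-2 = 1*(2*N-4*s-4) - (N-s-2) ∧
    (2*N-4*s-4) * a = ((N-s)^2-2*N) - (N-3*s-2)^2 ∧
    0 ≤ N-3*s-2 ∧ (N-3*s-2)^2 < (N-s)^2-2*N ∧ ((N-s)^2-2*N) < (N-3*s-2+(2*N-4*s-4))^2 ∧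
    ((N-s)^2-2*N < (N-s-2+(2*N-4*s-4))^2) ∧ 2 ≤ 2*N-4*s-4 := by
  subst ha
  have h2 : s ≤ s*s := by nlinarith
  have h3 : s*s ≤ s*s*s := by nlinarith
  refine ⟨by ring, by ring, by nlinarith, by nlinarith, by nlinarith, by nlinarith, by nlinarith⟩

lemma arith2 (s a w N : ℤ) (hs : 1 ≤ s) (ha : a = 2*s+1) (hw : a^2 ≤ w) (hN : N = a*w) :
    N-a-s = (2*w-3)*a - (N-3*s-2) ∧
    a * (2*N-a-2*w-2*s) = ((N-s)^2-2*N) - (N-a-s)^2 ∧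
    0 ≤ N-a-s ∧ (N-a-s)^2 < (N-s)^2-2*N ∧
    (N-s)^2-2*N < (N-a-s+a)^2 ∧
    ((N-s)^2-2*N < (N-3*s-2+a)^2) ∧ 2 ≤ a := by
  subst ha; subst hN
  have h2 : s ≤ s*s := by nlinarith
  have h3 : s*s ≤ s*s*s := by nlinarith
  refine ⟨by ring, by ring, by nlinarith, by nlinarith, by nlinarith, by nlinarith, by nlinarith⟩

lemma arithA (s a u u1 v N : ℤ) (hs : 1 ≤ s) (ha : a = 2*s+1) (hu : a ≤ u) (hv : a ≤ v)
    (hu1 : u1 = a*u) (hN : N = u*v) :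
    N-2*v+s = (u-2)*(2*v) - (N-2*v-s) ∧
    (2*v)*(2*N-2*v-u1+2*s) = ((N-s)^2-2*N) - (N-2*v+s)^2 ∧
    0 ≤ N-2*v+s ∧ (N-2*v+s)^2 < (N-s)^2-2*N ∧ (N-s)^2-2*N < (N-2*v+s+2*v)^2 ∧
    ((N-s)^2-2*N < (N-2*v-s+2*v)^2) ∧ 2 ≤ 2*v := by
  subst ha; subst hu1; subst hN
  have hNpos : 0 < u*v := mul_pos (by linarith) (by linarith)
  have hNs : 0 ≤ u*v - s := by nlinarith
  have hQb : 0 < 2*(u*v)-2*v-(2*s+1)*u+2*s := by nlinarith [mul_nonneg (by linarith : (0:ℤ) ≤ v-(2*s+1)) (by linarith : (0:ℤ) ≤ u)]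
  refine ⟨by ring, by ring, by nlinarith, ?_, ?_, ?_, by linarith⟩
  · nlinarith [mul_pos (by linarith : (0:ℤ) < v) hQb]
  · exact Dlt s (u*v) _ hNpos hNs (by linarith)
  · exact Dlt s (u*v) _ hNpos hNs (by linarith)

lemma arithB (s a u u1 v N : ℤ) (hs : 1 ≤ s) (ha : a = 2*s+1) (hu : a ≤ u) (hv : a^2 ≤ v)
    (hu1 : u1 = a*u) (hN : N = u*v) :
    N-u1+s = 1*(2*N-2*v-u1+2*s) - (N-2*v+s) ∧
    (2*N-2*v-u1+2*s)*u1 = ((N-s)^2-2*N) - (N-u1+s)^2 ∧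
    0 ≤ N-u1+s ∧ (N-u1+s)^2 < (N-s)^2-2*N ∧
    (N-s)^2-2*N < (N-u1+s+(2*N-2*v-u1+2*s))^2 ∧
    ((N-s)^2-2*N < (N-2*v+s+(2*N-2*v-u1+2*s))^2) ∧ 2 ≤ 2*N-2*v-u1+2*s := by
  subst ha; subst hu1; subst hN
  have hNpos : 0 < u*v := mul_pos (by linarith) (by nlinarith)
  have hNs : 0 ≤ u*v - s := by nlinarith
  have hx : 0 ≤ u - (2*s+1) := by linarith
  have hy : 0 ≤ v - (2*s+1)^2 := by linarith
  have hxy : 0 ≤ (u - (2*s+1)) * (v - (2*s+1)^2) := mul_nonneg hx hy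
  have hP' : 0 ≤ u*v-(2*s+1)*u+s := by nlinarith [mul_nonneg (by nlinarith : (0:ℤ) ≤ v-(2*s+1)) (by linarith : (0:ℤ) ≤ u)]
  have hQb : 2*s+2 ≤ 2*(u*v)-2*v-(2*s+1)*u+2*s := by nlinarith
  refine ⟨by ring, by ring, hP', ?_, ?_, ?_, by linarith⟩
  · nlinarith [mul_pos (by nlinarith : (0:ℤ) < (2*s+1)*u) (by linarith : (0:ℤ) < 2*(u*v)-2*v-(2*s+1)*u+2*s)]
  · exact Dlt s (u*v) _ hNpos hNs (by nlinarith)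
  · exact Dlt s (u*v) _ hNpos hNs (by nlinarith)

lemma arithBlast (s a N : ℤ) (hs : 1 ≤ s) (ha : a = 2*s+1) (hN : a^3 ≤ N) :
    N-s-2 = 2*(2*N-2*a-N+2*s) - (N-2*a+s) ∧
    (2*N-2*a-N+2*s)*2 = ((N-s)^2-2*N) - (N-s-2)^2 ∧
    0 ≤ N-s-2 ∧ (N-s-2)^2 < (N-s)^2-2*N ∧
    (N-s)^2-2*N < (N-s-2+(2*N-2*a-N+2*s))^2 ∧
    ((N-s)^2-2*N < (N-2*a+s+(2*N-2*a-N+2*s))^2) ∧ 2 ≤ 2*N-2*a-N+2*s := by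
  subst ha
  have h2 : s ≤ s*s := by nlinarith
  have h3 : s*s ≤ s*s*s := by nlinarith
  have hNpos : 0 < N := by nlinarith
  have hNs : 0 ≤ N - s := by nlinarith
  refine ⟨by ring, by ring, by nlinarith, by nlinarith, ?_, ?_, by nlinarith⟩
  · exact Dlt s N _ hNpos hNs (by nlinarith)
  · exact Dlt s N _ hNpos hNs (by nlinarith)

lemma arithMid (s a N : ℤ) (hs : 1 ≤ s) (ha : a = 2*s+1) (hN : a^3 ≤ N) :
    N-s-2 = (N-s-2)*2 - (N-s-2) ∧
    2*(2*N-2*a-N+2*s) = ((N-s)^2-2*N) - (N-s-2)^2 ∧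
    0 ≤ N-s-2 ∧ (N-s-2)^2 < (N-s)^2-2*N ∧ (N-s)^2-2*N < (N-s-2+2)^2 := by
  subst ha
  have h2 : s ≤ s*s := by nlinarith
  have h3 : s*s ≤ s*s*s := by nlinarith
  refine ⟨by ring, by ring, by nlinarith, by nlinarith, by nlinarith⟩

lemma arithC (s a u u1 w N : ℤ) (hs : 1 ≤ s) (ha : a = 2*s+1) (hu : a ≤ u) (hw : a ≤ w)
    (hu1 : u1 = a*u) (hN : N = a*u*w) :
    N-u1-s = (2*w-2)*u1 - (N-u1+s) ∧
    u1*(2*N-u1-2*w-2*s) = ((N-s)^2-2*N) - (N-u1-s)^2 ∧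
    0 ≤ N-u1-s ∧ (N-u1-s)^2 < (N-s)^2-2*N ∧
    (N-s)^2-2*N < (N-u1-s+u1)^2 ∧
    ((N-s)^2-2*N < (N-u1+s+u1)^2) ∧ 2 ≤ u1 := by
  subst ha; subst hu1; subst hN
  have hNpos : 0 < (2*s+1)*u*w := mul_pos (mul_pos (by linarith) (by linarith)) (by linarith)
  have huw : 1 ≤ u*w := by nlinarith [mul_pos (by linarith : (0:ℤ) < u) (by linarith : (0:ℤ) < w)]
  have hNs : 0 ≤ (2*s+1)*u*w - s := by nlinarith [mul_nonneg (by linarith : (0:ℤ) ≤ 2*s+1) (by linarith : (0:ℤ) ≤ u*w - 1)]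
  have hau : 2*s+1 ≤ (2*s+1)*u := by nlinarith
  have hP' : 0 ≤ (2*s+1)*u*w-(2*s+1)*u-s := by nlinarith [mul_nonneg (by linarith : (0:ℤ) ≤ (2*s+1)*u) (by linarith : (0:ℤ) ≤ w - (2*s+1))]
  have hQe : 2*s+2 ≤ 2*((2*s+1)*u*w)-(2*s+1)*u-2*w-2*s := by
    nlinarith [mul_nonneg (mul_nonneg (by linarith : (0:ℤ) ≤ 2*s+1) (by linarith : (0:ℤ) ≤ u - (2*s+1))) (by linarith : (0:ℤ) ≤ w - 1), mul_nonneg (by linarith : (0:ℤ) ≤ 2*s-1) (by linarith : (0:ℤ) ≤ w)]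
  refine ⟨by ring, by ring, hP', ?_, ?_, ?_, by linarith⟩
  · nlinarith [mul_pos (by linarith : (0:ℤ) < (2*s+1)*u) (by linarith : (0:ℤ) < 2*((2*s+1)*u*w)-(2*s+1)*u-2*w-2*s)]
  · exact Dlt s ((2*s+1)*u*w) _ hNpos hNs (by linarith)
  · exact Dlt s ((2*s+1)*u*w) _ hNpos hNs (by linarith)

lemma arithE (s a u u1 w N : ℤ) (hs : 1 ≤ s) (ha : a = 2*s+1) (hu : 1 ≤ u) (hw : a ≤ w)
    (hu1 : u1 = a*u) (hN : N = a*u*w) :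
    N-2*w-s = 1*(2*N-u1-2*w-2*s) - (N-u1-s) ∧
    (2*N-u1-2*w-2*s)*(2*w) = ((N-s)^2-2*N) - (N-2*w-s)^2 ∧
    0 ≤ N-2*w-s ∧ (N-2*w-s)^2 < (N-s)^2-2*N ∧
    (N-s)^2-2*N < (N-2*w-s+(2*N-u1-2*w-2*s))^2 ∧
    ((N-s)^2-2*N < (N-u1-s+(2*N-u1-2*w-2*s))^2) ∧
    2 ≤ 2*N-u1-2*w-2*s := by
  subst ha; subst hu1; subst hN
  have hNpos : 0 < (2*s+1)*u*w := mul_pos (mul_pos (by linarith) (by linarith)) (by linarith)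
  have hau3 : 3 ≤ (2*s+1)*u := by nlinarith
  have hw3 : 3 ≤ w := by linarith
  have f1 : 3*((2*s+1)*u) ≤ (2*s+1)*u*w := by nlinarith [mul_nonneg (by linarith : (0:ℤ) ≤ (2*s+1)*u) (by linarith : (0:ℤ) ≤ w - 3)]
  have f2 : 3*w ≤ (2*s+1)*u*w := by nlinarith [mul_nonneg (by linarith : (0:ℤ) ≤ (2*s+1)*u - 3) (by linarith : (0:ℤ) ≤ w)]
  have f3 : 6*s ≤ (2*s+1)*u*w := by nlinarith [mul_nonneg (by linarith : (0:ℤ) ≤ (2*s+1)*u - 3) (by linarith : (0:ℤ) ≤ w), mul_nonneg (by linarith : (0:ℤ) ≤ s) (by linarith : (0:ℤ) ≤ w - 3)]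
  have hNs : 0 ≤ (2*s+1)*u*w - s := by linarith
  have hQe : 2*s+2 ≤ 2*((2*s+1)*u*w)-(2*s+1)*u-2*w-2*s := by linarith
  refine ⟨by ring, by ring, by linarith, ?_, ?_, ?_, by linarith⟩
  · nlinarith [mul_pos (by linarith : (0:ℤ) < 2*w) (by linarith : (0:ℤ) < 2*((2*s+1)*u*w)-(2*s+1)*u-2*w-2*s)]
  · exact Dlt s ((2*s+1)*u*w) _ hNpos hNs (by linarith)
  · exact Dlt s ((2*s+1)*u*w) _ hNpos hNs (by linarith)


variable (s k : ℕ)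

def aI : ℤ := 1 + 2*(s:ℤ)
def NI : ℤ := aI s ^ k
def DI : ℤ := (NI s k - s)^2 - 2*NI s k
def c0 : ℤ := NI s k - (s:ℤ) - 2

def hP (n : ℕ) : ℤ :=
  if n = 0 then 0
  else if n = 1 then c0 s k
  else if n = 2 then NI s k - 3*s - 2
  else if n = 4*k-2 then c0 s k
  else if n % 4 = 0 then NI s k - 2*aI s^(k - n/4) - s
  else if n % 4 = 1 then NI s k - 2*aI s^(k - n/4) + s
  else if n % 4 = 2 then NI s k - aI s^(n/4+1) + s
  else NI s k - aI s^(n/4+1) - s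

def hQ (n : ℕ) : ℤ :=
  if n = 0 then 1
  else if n = 1 then 2*NI s k - 4*s - 4
  else if n = 2 then aI s
  else if n = 4*k-2 then 2
  else if n % 4 = 0 then 2*aI s^(k - n/4)
  else if n % 4 = 1 then 2*NI s k - 2*aI s^(k - n/4) - aI s^(n/4+1) + 2*s
  else if n % 4 = 2 then aI s^(n/4+1)
  else 2*NI s k - aI s^(n/4+1) - 2*aI s^(k - n/4 - 1) - 2*s

def hA (n : ℕ) : ℤ :=
  if n = 0 then c0 s k
  else if n = 2 then 2*aI s^(k-1) - 3
  else if n = 4*k-2 then c0 s k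
  else if n = 4*k-3 then 2
  else if n % 4 = 0 then aI s^(n/4) - 2
  else if n % 4 = 2 then 2*aI s^(k - n/4 - 1) - 2
  else 1

section values
variable {k}
variable (hk : 3 ≤ k)

lemma hP0 : hP s k 0 = 0 := by simp [hP]
lemma hP1 : hP s k 1 = c0 s k := by simp [hP]
lemma hP2 : hP s k 2 = NI s k - 3*s - 2 := by
  unfold hP; rw [if_neg (by omega), if_neg (by omega), if_pos rfl]
include hk
lemma hPm : hP s k (4*k-2) = c0 s k := by
  unfold hP; rw [if_neg (by omega), if_neg (by omega), if_neg (by omega), if_pos rfl]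
lemma hPA {j : ℕ} (h1 : 1 ≤ j) (h2 : j ≤ k-1) : hP s k (4*j) = NI s k - 2*aI s^(k-j) - s := by
  unfold hP
  rw [if_neg (by omega), if_neg (by omega), if_neg (by omega), if_neg (by omega),
    if_pos (by omega), show 4*j/4 = j by omega]
lemma hPB {j : ℕ} (h1 : 1 ≤ j) (h2 : j ≤ k-1) : hP s k (4*j+1) = NI s k - 2*aI s^(k-j) + s := by
  unfold hP
  rw [if_neg (by omega), if_neg (by omega), if_neg (by omega), if_neg (by omega),
    if_neg (by omega), if_pos (by omega), show (4*j+1)/4 = j by omega]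
lemma hPC {j : ℕ} (h1 : 1 ≤ j) (h2 : j ≤ k-2) : hP s k (4*j+2) = NI s k - aI s^(j+1) + s := by
  unfold hP
  rw [if_neg (by omega), if_neg (by omega), if_neg (by omega), if_neg (by omega),
    if_neg (by omega), if_neg (by omega), if_pos (by omega), show (4*j+2)/4 = j by omega]
lemma hPE {j : ℕ} (h2 : j ≤ k-2) : hP s k (4*j+3) = NI s k - aI s^(j+1) - s := by
  unfold hP
  rw [if_neg (by omega), if_neg (by omega), if_neg (by omega), if_neg (by omega),
    if_neg (by omega), if_neg (by omega), if_neg (by omega), show (4*j+3)/4 = j by omega]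

lemma hQ0 : hQ s k 0 = 1 := by simp [hQ]
lemma hQ1 : hQ s k 1 = 2*NI s k - 4*s - 4 := by
  unfold hQ; rw [if_neg (by omega), if_pos rfl]
lemma hQ2v : hQ s k 2 = aI s := by
  unfold hQ; rw [if_neg (by omega), if_neg (by omega), if_pos rfl]
lemma hQm : hQ s k (4*k-2) = 2 := by
  unfold hQ; rw [if_neg (by omega), if_neg (by omega), if_neg (by omega), if_pos rfl]
lemma hQA {j : ℕ} (h1 : 1 ≤ j) (h2 : j ≤ k-1) : hQ s k (4*j) = 2*aI s^(k-j) := by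
  unfold hQ
  rw [if_neg (by omega), if_neg (by omega), if_neg (by omega), if_neg (by omega),
    if_pos (by omega), show 4*j/4 = j by omega]
lemma hQB {j : ℕ} (h1 : 1 ≤ j) (h2 : j ≤ k-1) :
    hQ s k (4*j+1) = 2*NI s k - 2*aI s^(k-j) - aI s^(j+1) + 2*s := by
  unfold hQ
  rw [if_neg (by omega), if_neg (by omega), if_neg (by omega), if_neg (by omega),
    if_neg (by omega), if_pos (by omega), show (4*j+1)/4 = j by omega]
lemma hQC {j : ℕ} (h1 : 1 ≤ j) (h2 : j ≤ k-2) : hQ s k (4*j+2) = aI s^(j+1) := by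
  unfold hQ
  rw [if_neg (by omega), if_neg (by omega), if_neg (by omega), if_neg (by omega),
    if_neg (by omega), if_neg (by omega), if_pos (by omega), show (4*j+2)/4 = j by omega]
lemma hQE {j : ℕ} (h2 : j ≤ k-2) :
    hQ s k (4*j+3) = 2*NI s k - aI s^(j+1) - 2*aI s^(k-j-1) - 2*s := by
  unfold hQ
  rw [if_neg (by omega), if_neg (by omega), if_neg (by omega), if_neg (by omega),
    if_neg (by omega), if_neg (by omega), if_neg (by omega), show (4*j+3)/4 = j by omega]

lemma hA0 : hA s k 0 = c0 s k := by simp [hA]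
lemma hA1 : hA s k 1 = 1 := by
  unfold hA
  rw [if_neg (by omega), if_neg (by omega), if_neg (by omega), if_neg (by omega),
    if_neg (by omega), if_neg (by omega)]
lemma hA2v : hA s k 2 = 2*aI s^(k-1) - 3 := by
  unfold hA; rw [if_neg (by omega), if_pos rfl]
lemma hAm : hA s k (4*k-2) = c0 s k := by
  unfold hA; rw [if_neg (by omega), if_neg (by omega), if_pos rfl]
lemma hAlast : hA s k (4*k-3) = 2 := by
  unfold hA; rw [if_neg (by omega), if_neg (by omega), if_neg (by omega), if_pos rfl]
lemma hAA {j : ℕ} (h1 : 1 ≤ j) (h2 : j ≤ k-1) : hA s k (4*j) = aI s^j - 2 := by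
  unfold hA
  rw [if_neg (by omega), if_neg (by omega), if_neg (by omega), if_neg (by omega),
    if_pos (by omega), show 4*j/4 = j by omega]
lemma hAC {j : ℕ} (h1 : 1 ≤ j) (h2 : j ≤ k-2) : hA s k (4*j+2) = 2*aI s^(k-j-1) - 2 := by
  unfold hA
  rw [if_neg (by omega), if_neg (by omega), if_neg (by omega), if_neg (by omega),
    if_neg (by omega), if_pos (by omega), show (4*j+2)/4 = j by omega]
lemma hAodd1 {j : ℕ} (h1 : 1 ≤ j) (h2 : j ≤ k-2) : hA s k (4*j+1) = 1 := by
  unfold hA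
  rw [if_neg (by omega), if_neg (by omega), if_neg (by omega), if_neg (by omega),
    if_neg (by omega), if_neg (by omega)]
lemma hAodd3 {j : ℕ} (h2 : j ≤ k-2) : hA s k (4*j+3) = 1 := by
  unfold hA
  rw [if_neg (by omega), if_neg (by omega), if_neg (by omega), if_neg (by omega),
    if_neg (by omega), if_neg (by omega)]

end values


section glue
variable (s k : ℕ)

lemma aI_eq : aI s = 2*(s:ℤ)+1 := by unfold aI; ring
lemma haI1 : (1:ℤ) ≤ aI s := by
  unfold aI; have : (0:ℤ) ≤ (s:ℤ) := Int.natCast_nonneg s; linarith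
lemma hpow_le {i j : ℕ} (h : i ≤ j) : aI s ^ i ≤ aI s ^ j :=
  pow_le_pow_right₀ (haI1 s) h
lemma haIle {j : ℕ} (hj : 1 ≤ j) : aI s ≤ aI s^j := by
  simpa using hpow_le s (i := 1) hj
lemma haI2le {j : ℕ} (hj : 2 ≤ j) : aI s^2 ≤ aI s^j := hpow_le s hj
lemma hone_le {j : ℕ} : (1:ℤ) ≤ aI s^j := by
  simpa using hpow_le s (i := 0) (Nat.zero_le j)
lemma hNcube (hk : 3 ≤ k) : aI s^3 ≤ NI s k := hpow_le s hk
lemma hNuv {i j : ℕ} (h : i + j = k) : aI s^i * aI s^j = NI s k := by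
  unfold NI; rw [← pow_add, h]
lemma hN3 {j m : ℕ} (h : 1 + j + m = k) : aI s * aI s^j * aI s^m = NI s k := by
  unfold NI; rw [← h]; ring
lemma DI_eq : DI s k = (NI s k - (s:ℤ))^2 - 2*NI s k := rfl
lemma c0_eq : c0 s k = NI s k - (s:ℤ) - 2 := rfl

lemma Sfull (hs : 1 ≤ s) (hk : 3 ≤ k) {m : ℕ} (hm : m ≤ 4*k-3) :
    hP s k (m+1) = hA s k m * hQ s k m - hP s k m ∧
    hQ s k m * hQ s k (m+1) = DI s k - hP s k (m+1)^2 ∧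
    0 ≤ hP s k (m+1) ∧ hP s k (m+1)^2 < DI s k ∧
    DI s k < (hP s k (m+1) + hQ s k m)^2 := by
  have hs' : (1:ℤ) ≤ (s:ℤ) := by exact_mod_cast hs
  have ha := aI_eq s
  have hcube : aI s^3 ≤ NI s k := hNcube s k hk
  rw [DI_eq]
  rcases eq_or_ne m 0 with rfl | h0
  · norm_num
    rw [hP1 s, hA0 s hk, hQ0 s hk, hQ1 s hk, hP0 s, c0_eq]
    obtain ⟨e1,e2,e3,e4,e5⟩ := arith0 (s:ℤ) (aI s) (NI s k) hs' ha hcube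
    exact ⟨by linarith, by linarith, e3, e4, by linarith⟩
  rcases eq_or_ne m 1 with rfl | h1
  · norm_num
    rw [hP2 s, hA1 s hk, hQ1 s hk, hQ2v s hk, hP1 s, c0_eq]
    obtain ⟨e1,e2,e3,e4,e5,_,_⟩ := arith1 (s:ℤ) (aI s) (NI s k) hs' ha hcube
    exact ⟨e1, e2, e3, e4, e5⟩
  rcases eq_or_ne m 2 with rfl | h2
  · norm_num
    have vP3 : hP s k 3 = NI s k - aI s - (s:ℤ) := by
      have h := hPE s (k := k) (j := 0) (by omega); norm_num at h; exact h
    have vQ3 : hQ s k 3 = 2*NI s k - aI s - 2*aI s^(k-1) - 2*(s:ℤ) := by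
      have h := hQE s (k := k) (j := 0) (by omega); norm_num at h; exact h
    have hNw : NI s k = aI s * aI s^(k-1) := by
      unfold NI; conv_lhs => rw [show k = (k-1)+1 by omega]
      rw [pow_succ']
    rw [vP3, vQ3, hP2 s, hA2v s hk, hQ2v s hk]
    obtain ⟨e1,e2,e3,e4,e5,_,_⟩ :=
      arith2 (s:ℤ) (aI s) (aI s^(k-1)) (NI s k) hs' ha (haI2le s (by omega)) hNw
    exact ⟨e1, e2, e3, e4, e5⟩
  -- now m ≥ 3
  have h4 : m % 4 = 0 ∨ m % 4 = 1 ∨ m % 4 = 2 ∨ m % 4 = 3 := by omega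
  rcases h4 with hr | hr | hr | hr
  · -- m = 4j, 1 ≤ j ≤ k-1
    obtain ⟨j, rfl⟩ : ∃ j, m = 4*j := ⟨m/4, by omega⟩
    have hj1 : 1 ≤ j := by omega
    have hjk : j ≤ k-1 := by omega
    rw [hPA s hk hj1 hjk, hPB s hk hj1 hjk, hQA s hk hj1 hjk, hQB s hk hj1 hjk,
      hAA s hk hj1 hjk]
    obtain ⟨e1,e2,e3,e4,e5,_,_⟩ :=
      arithA (s:ℤ) (aI s) (aI s^j) (aI s^(j+1)) (aI s^(k-j)) (NI s k) hs' ha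
        (haIle s hj1) (haIle s (by omega)) (pow_succ' (aI s) j) (hNuv s k (by omega)).symm
    exact ⟨e1, e2, e3, e4, e5⟩
  · -- m = 4j+1
    obtain ⟨j, rfl⟩ : ∃ j, m = 4*j+1 := ⟨m/4, by omega⟩
    have hj1 : 1 ≤ j := by omega
    rw [show 4*j+1+1 = 4*j+2 by omega]
    rcases eq_or_ne j (k-1) with rfl | hjne
    · -- m = 4k-3 : last B step into the middle
      rw [show 4*(k-1)+2 = 4*k-2 by omega, show 4*(k-1)+1 = 4*k-3 by omega]
      have vP : hP s k (4*k-3) = NI s k - 2*aI s + (s:ℤ) := by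
        have h := hPB s hk (j := k-1) (by omega) le_rfl
        rw [show 4*(k-1)+1 = 4*k-3 by omega, show k-(k-1) = 1 by omega, pow_one] at h
        exact h
      have vQ : hQ s k (4*k-3) = 2*NI s k - 2*aI s - NI s k + 2*(s:ℤ) := by
        have h := hQB s hk (j := k-1) (by omega) le_rfl
        rw [show 4*(k-1)+1 = 4*k-3 by omega, show k-(k-1) = 1 by omega, pow_one,
          show (k-1)+1 = k by omega, show aI s^k = NI s k from rfl] at h
        exact h
      rw [hPm s hk, hQm s hk, hAlast s hk, vP, vQ, c0_eq]
      obtain ⟨e1,e2,e3,e4,e5,_,_⟩ := arithBlast (s:ℤ) (aI s) (NI s k) hs' ha hcube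
      exact ⟨e1, e2, e3, e4, e5⟩
    · -- generic B step, j ≤ k-2
      have hjk : j ≤ k-2 := by omega
      rw [hPB s hk hj1 (by omega), hQB s hk hj1 (by omega), hAodd1 s hk hj1 hjk,
        hPC s hk hj1 hjk, hQC s hk hj1 hjk]
      obtain ⟨e1,e2,e3,e4,e5,_,_⟩ :=
        arithB (s:ℤ) (aI s) (aI s^j) (aI s^(j+1)) (aI s^(k-j)) (NI s k) hs' ha
          (haIle s hj1) (haI2le s (by omega)) (pow_succ' (aI s) j) (hNuv s k (by omega)).symm
      exact ⟨e1, e2, e3, e4, e5⟩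
  · -- m = 4j+2, 1 ≤ j ≤ k-2
    obtain ⟨j, rfl⟩ : ∃ j, m = 4*j+2 := ⟨m/4, by omega⟩
    have hj1 : 1 ≤ j := by omega
    have hjk : j ≤ k-2 := by omega
    rw [show 4*j+2+1 = 4*j+3 by omega]
    rw [hPC s hk hj1 hjk, hQC s hk hj1 hjk, hAC s hk hj1 hjk, hPE s hk hjk, hQE s hk hjk]
    obtain ⟨e1,e2,e3,e4,e5,_,_⟩ :=
      arithC (s:ℤ) (aI s) (aI s^j) (aI s^(j+1)) (aI s^(k-j-1)) (NI s k) hs' ha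
        (haIle s hj1) (haIle s (by omega)) (pow_succ' (aI s) j) (hN3 s k (by omega)).symm
    exact ⟨e1, e2, e3, e4, e5⟩
  · -- m = 4j+3, j ≤ k-2
    obtain ⟨j, rfl⟩ : ∃ j, m = 4*j+3 := ⟨m/4, by omega⟩
    have hjk : j ≤ k-2 := by omega
    rw [show 4*j+3+1 = 4*(j+1) by omega]
    have vPA : hP s k (4*(j+1)) = NI s k - 2*aI s^(k-j-1) - (s:ℤ) := by
      have h := hPA s hk (j := j+1) (by omega) (by omega)
      rwa [show k-(j+1) = k-j-1 by omega] at h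
    have vQA : hQ s k (4*(j+1)) = 2*aI s^(k-j-1) := by
      have h := hQA s hk (j := j+1) (by omega) (by omega)
      rwa [show k-(j+1) = k-j-1 by omega] at h
    rw [vPA, vQA, hPE s hk hjk, hQE s hk hjk, hAodd3 s hk hjk]
    obtain ⟨e1,e2,e3,e4,e5,_,_⟩ :=
      arithE (s:ℤ) (aI s) (aI s^j) (aI s^(j+1)) (aI s^(k-j-1)) (NI s k) hs' ha
        (hone_le s) (haIle s (by omega)) (pow_succ' (aI s) j) (hN3 s k (by omega)).symm
    exact ⟨e1, e2, e3, e4, e5⟩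

lemma RQfull (hs : 1 ≤ s) (hk : 3 ≤ k) {m : ℕ} (hm1 : 1 ≤ m) (hm : m ≤ 4*k-3) :
    DI s k < (hP s k m + hQ s k m)^2 ∧ 2 ≤ hQ s k m := by
  have hs' : (1:ℤ) ≤ (s:ℤ) := by exact_mod_cast hs
  have ha := aI_eq s
  have hcube : aI s^3 ≤ NI s k := hNcube s k hk
  rw [DI_eq]
  rcases eq_or_ne m 1 with rfl | h1
  · rw [hP1 s, hQ1 s hk, c0_eq]
    obtain ⟨_,_,_,_,_,e6,e7⟩ := arith1 (s:ℤ) (aI s) (NI s k) hs' ha hcube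
    exact ⟨e6, e7⟩
  rcases eq_or_ne m 2 with rfl | h2
  · rw [hP2 s, hQ2v s hk]
    have hNw : NI s k = aI s * aI s^(k-1) := by
      unfold NI; conv_lhs => rw [show k = (k-1)+1 by omega]
      rw [pow_succ']
    obtain ⟨_,_,_,_,_,e6,e7⟩ :=
      arith2 (s:ℤ) (aI s) (aI s^(k-1)) (NI s k) hs' ha (haI2le s (by omega)) hNw
    exact ⟨e6, e7⟩
  have h4 : m % 4 = 0 ∨ m % 4 = 1 ∨ m % 4 = 2 ∨ m % 4 = 3 := by omega
  rcases h4 with hr | hr | hr | hr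
  · obtain ⟨j, rfl⟩ : ∃ j, m = 4*j := ⟨m/4, by omega⟩
    have hj1 : 1 ≤ j := by omega
    have hjk : j ≤ k-1 := by omega
    rw [hPA s hk hj1 hjk, hQA s hk hj1 hjk]
    obtain ⟨_,_,_,_,_,e6,e7⟩ :=
      arithA (s:ℤ) (aI s) (aI s^j) (aI s^(j+1)) (aI s^(k-j)) (NI s k) hs' ha
        (haIle s hj1) (haIle s (by omega)) (pow_succ' (aI s) j) (hNuv s k (by omega)).symm
    exact ⟨e6, e7⟩
  · obtain ⟨j, rfl⟩ : ∃ j, m = 4*j+1 := ⟨m/4, by omega⟩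
    have hj1 : 1 ≤ j := by omega
    rcases eq_or_ne j (k-1) with rfl | hjne
    · rw [show 4*(k-1)+1 = 4*k-3 by omega]
      have vP : hP s k (4*k-3) = NI s k - 2*aI s + (s:ℤ) := by
        have h := hPB s hk (j := k-1) (by omega) le_rfl
        rw [show 4*(k-1)+1 = 4*k-3 by omega, show k-(k-1) = 1 by omega, pow_one] at h
        exact h
      have vQ : hQ s k (4*k-3) = 2*NI s k - 2*aI s - NI s k + 2*(s:ℤ) := by
        have h := hQB s hk (j := k-1) (by omega) le_rfl
        rw [show 4*(k-1)+1 = 4*k-3 by omega, show k-(k-1) = 1 by omega, pow_one,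
          show (k-1)+1 = k by omega, show aI s^k = NI s k from rfl] at h
        exact h
      rw [vP, vQ]
      obtain ⟨_,_,_,_,_,e6,e7⟩ := arithBlast (s:ℤ) (aI s) (NI s k) hs' ha hcube
      exact ⟨e6, e7⟩
    · have hjk : j ≤ k-2 := by omega
      rw [hPB s hk hj1 (by omega), hQB s hk hj1 (by omega)]
      obtain ⟨_,_,_,_,_,e6,e7⟩ :=
        arithB (s:ℤ) (aI s) (aI s^j) (aI s^(j+1)) (aI s^(k-j)) (NI s k) hs' ha
          (haIle s hj1) (haI2le s (by omega)) (pow_succ' (aI s) j) (hNuv s k (by omega)).symm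
      exact ⟨e6, e7⟩
  · obtain ⟨j, rfl⟩ : ∃ j, m = 4*j+2 := ⟨m/4, by omega⟩
    have hj1 : 1 ≤ j := by omega
    have hjk : j ≤ k-2 := by omega
    rw [hPC s hk hj1 hjk, hQC s hk hj1 hjk]
    obtain ⟨_,_,_,_,_,e6,e7⟩ :=
      arithC (s:ℤ) (aI s) (aI s^j) (aI s^(j+1)) (aI s^(k-j-1)) (NI s k) hs' ha
        (haIle s hj1) (haIle s (by omega)) (pow_succ' (aI s) j) (hN3 s k (by omega)).symm
    exact ⟨e6, e7⟩
  · obtain ⟨j, rfl⟩ : ∃ j, m = 4*j+3 := ⟨m/4, by omega⟩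
    have hjk : j ≤ k-2 := by omega
    rw [hPE s hk hjk, hQE s hk hjk]
    obtain ⟨_,_,_,_,_,e6,e7⟩ :=
      arithE (s:ℤ) (aI s) (aI s^j) (aI s^(j+1)) (aI s^(k-j-1)) (NI s k) hs' ha
        (hone_le s) (haIle s (by omega)) (pow_succ' (aI s) j) (hN3 s k (by omega)).symm
    exact ⟨e6, e7⟩

lemma Q2full (hs : 1 ≤ s) (hk : 3 ≤ k) {m : ℕ} (hm1 : 1 ≤ m) (hm : m ≤ 4*k-2) :
    2 ≤ hQ s k m := by
  rcases eq_or_ne m (4*k-2) with rfl | hne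
  · rw [hQm s hk]
  · exact (RQfull s k hs hk hm1 (by omega)).2

lemma Qpos (hs : 1 ≤ s) (hk : 3 ≤ k) {m : ℕ} (hm : m ≤ 4*k-2) : 0 < hQ s k m := by
  rcases eq_or_ne m 0 with rfl | hne
  · rw [hQ0 s hk]; norm_num
  · linarith [Q2full s k hs hk (by omega : 1 ≤ m) hm]

def tP (n : ℕ) : ℤ :=
  if n ≤ 4*k-2 then hP s k n else if n = 8*k-4 then c0 s k else hP s k (8*k-3-n)
def tQ (n : ℕ) : ℤ :=
  if n ≤ 4*k-2 then hQ s k n else if n = 8*k-4 then 1 else hQ s k (8*k-4-n)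
def tA (n : ℕ) : ℤ :=
  if n ≤ 4*k-2 then hA s k n else if n = 8*k-4 then 2*c0 s k else hA s k (8*k-4-n)

lemma tP_low {n : ℕ} (h : n ≤ 4*k-2) : tP s k n = hP s k n := if_pos h
lemma tQ_low {n : ℕ} (h : n ≤ 4*k-2) : tQ s k n = hQ s k n := if_pos h
lemma tA_low {n : ℕ} (h : n ≤ 4*k-2) : tA s k n = hA s k n := if_pos h
lemma tP_hi (hk : 3 ≤ k) {n : ℕ} (h1 : 4*k-2 < n) (h2 : n < 8*k-4) :
    tP s k n = hP s k (8*k-3-n) := by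
  unfold tP; rw [if_neg (by omega), if_neg (by omega)]
lemma tQ_hi (hk : 3 ≤ k) {n : ℕ} (h1 : 4*k-2 < n) (h2 : n < 8*k-4) :
    tQ s k n = hQ s k (8*k-4-n) := by
  unfold tQ; rw [if_neg (by omega), if_neg (by omega)]
lemma tA_hi (hk : 3 ≤ k) {n : ℕ} (h1 : 4*k-2 < n) (h2 : n < 8*k-4) :
    tA s k n = hA s k (8*k-4-n) := by
  unfold tA; rw [if_neg (by omega), if_neg (by omega)]
lemma tP_top (hk : 3 ≤ k) : tP s k (8*k-4) = c0 s k := by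
  unfold tP; rw [if_neg (by omega), if_pos rfl]
lemma tQ_top (hk : 3 ≤ k) : tQ s k (8*k-4) = 1 := by
  unfold tQ; rw [if_neg (by omega), if_pos rfl]

lemma tQ_two (hs : 1 ≤ s) (hk : 3 ≤ k) {n : ℕ} (h1 : 1 ≤ n) (h2 : n < 8*k-4) :
    2 ≤ tQ s k n := by
  rcases le_or_gt n (4*k-2) with h | h
  · rw [tQ_low s k h]
    exact Q2full s k hs hk h1 h
  · rw [tQ_hi s k hk h h2]
    exact Q2full s k hs hk (by omega) (by omega)

lemma stepOK (hs : 1 ≤ s) (hk : 3 ≤ k) {n : ℕ} (hn : n < 8*k-4) :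
    tP s k (n+1) = tA s k n * tQ s k n - tP s k n ∧
    tQ s k n * tQ s k (n+1) = DI s k - tP s k (n+1)^2 ∧
    0 ≤ tP s k (n+1) ∧ tP s k (n+1)^2 < DI s k ∧
    DI s k < (tP s k (n+1) + tQ s k n)^2 ∧ 0 < tQ s k n := by
  have hs' : (1:ℤ) ≤ (s:ℤ) := by exact_mod_cast hs
  have ha := aI_eq s
  have hcube : aI s^3 ≤ NI s k := hNcube s k hk
  rcases le_or_gt n (4*k-3) with h | h
  · -- first half
    rw [tP_low s k (by omega), tP_low s k (by omega), tQ_low s k (by omega),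
      tQ_low s k (by omega), tA_low s k (by omega)]
    obtain ⟨e1,e2,e3,e4,e5⟩ := Sfull s k hs hk h
    exact ⟨e1, e2, e3, e4, e5, Qpos s k hs hk (by omega)⟩
  rcases eq_or_ne n (4*k-2) with rfl | hne
  · -- middle step
    rw [tP_low s k le_rfl, tQ_low s k le_rfl, tA_low s k le_rfl,
      tP_hi s k hk (by omega) (by omega), tQ_hi s k hk (by omega) (by omega),
      show 8*k-3-(4*k-2+1) = 4*k-2 by omega, show 8*k-4-(4*k-2+1) = 4*k-3 by omega,
      hPm s hk, hQm s hk, hAm s hk]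
    have vQ : hQ s k (4*k-3) = 2*NI s k - 2*aI s - NI s k + 2*(s:ℤ) := by
      have h := hQB s hk (j := k-1) (by omega) le_rfl
      rw [show 4*(k-1)+1 = 4*k-3 by omega, show k-(k-1) = 1 by omega, pow_one,
        show (k-1)+1 = k by omega, show aI s^k = NI s k from rfl] at h
      exact h
    rw [vQ, c0_eq, DI_eq]
    obtain ⟨e1,e2,e3,e4,e5⟩ := arithMid (s:ℤ) (aI s) (NI s k) hs' ha hcube
    exact ⟨e1, e2, e3, e4, e5, by norm_num⟩
  · -- second half: m = 8k-4-n ∈ [1, 4k-3]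
    have hm1 : 1 ≤ 8*k-4-n := by omega
    have hm2 : 8*k-4-n ≤ 4*k-3 := by omega
    have hPn : tP s k n = hP s k (8*k-4-n+1) := by
      rw [tP_hi s k hk (by omega) hn, show 8*k-3-n = 8*k-4-n+1 by omega]
    have hQn : tQ s k n = hQ s k (8*k-4-n) := tQ_hi s k hk (by omega) hn
    have hAn : tA s k n = hA s k (8*k-4-n) := tA_hi s k hk (by omega) hn
    have hPn1 : tP s k (n+1) = hP s k (8*k-4-n) := by
      rcases eq_or_ne (n+1) (8*k-4) with he | he
      · rw [he, tP_top s k hk, show 8*k-4-n = 1 by omega, hP1, c0_eq]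
      · rw [tP_hi s k hk (by omega) (by omega), show 8*k-3-(n+1) = 8*k-4-n by omega]
    have hQn1 : tQ s k (n+1) = hQ s k (8*k-4-n-1) := by
      rcases eq_or_ne (n+1) (8*k-4) with he | he
      · rw [he, tQ_top s k hk, show 8*k-4-n-1 = 0 by omega, hQ0 s hk]
      · rw [tQ_hi s k hk (by omega) (by omega), show 8*k-4-(n+1) = 8*k-4-n-1 by omega]
    obtain ⟨f1,f2,f3,f4,_⟩ := Sfull s k hs hk (m := 8*k-4-n-1) (by omega)
    rw [show 8*k-4-n-1+1 = 8*k-4-n by omega] at f1 f2 f3 f4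
    obtain ⟨g1,g2,g3,g4,g5⟩ := Sfull s k hs hk (m := 8*k-4-n) hm2
    obtain ⟨r1,_⟩ := RQfull s k hs hk hm1 hm2
    rw [hPn, hQn, hAn, hPn1, hQn1]
    refine ⟨by linarith, by linarith [f2], f3, f4, r1, Qpos s k hs hk (by omega)⟩

end glue

section final
variable (s k : ℕ)

lemma base_facts (hs : 1 ≤ s) (hk : 3 ≤ k) :
    0 ≤ c0 s k ∧ c0 s k^2 < DI s k ∧ DI s k < (c0 s k + 1)^2 := by
  have hs' : (1:ℤ) ≤ (s:ℤ) := by exact_mod_cast hs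
  obtain ⟨_,_,e3,e4,e5⟩ := arith0 (s:ℤ) (aI s) (NI s k) hs' (aI_eq s) (hNcube s k hk)
  rw [DI_eq, c0_eq]
  exact ⟨e3, e4, by linarith⟩

lemma DIpos (hs : 1 ≤ s) (hk : 3 ≤ k) : 0 < DI s k := by
  obtain ⟨e3, e4, _⟩ := base_facts s k hs hk
  nlinarith

lemma DInotsq (hs : 1 ≤ s) (hk : 3 ≤ k) : ¬ IsSquare (DI s k) := by
  rintro ⟨r, hr⟩
  obtain ⟨e3, e4, e5⟩ := base_facts s k hs hk
  have h1 : c0 s k < |r| := by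
    by_contra hc; push_neg at hc
    nlinarith [mul_self_le_mul_self (abs_nonneg r) hc, abs_mul_abs_self r]
  have h2 : |r| < c0 s k + 1 := by
    by_contra hc; push_neg at hc
    nlinarith [mul_self_le_mul_self (by linarith : (0:ℤ) ≤ c0 s k + 1) hc, abs_mul_abs_self r]
  omega

lemma irrX (hs : 1 ≤ s) (hk : 3 ≤ k) : Irrational (Real.sqrt (DI s k)) := by
  have hD0 : (0:ℝ) ≤ (DI s k : ℝ) := by exact_mod_cast (DIpos s k hs hk).le
  apply irrational_nrt_of_notint_nrt 2 (DI s k)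
  · rw [sq, Real.mul_self_sqrt hD0]
  · rintro ⟨y, hy⟩
    apply DInotsq s k hs hk
    refine ⟨y, ?_⟩
    have : ((y*y : ℤ) : ℝ) = ((DI s k : ℤ) : ℝ) := by
      push_cast
      rw [← hy]
      exact Real.mul_self_sqrt hD0
    exact_mod_cast this.symm
  · norm_num

lemma floorX (hs : 1 ≤ s) (hk : 3 ≤ k) : ⌊Real.sqrt (DI s k)⌋ = c0 s k := by
  obtain ⟨e3, e4, e5⟩ := base_facts s k hs hk
  exact floor_sqrt e3 e4 e5

lemma invX (hs : 1 ≤ s) (hk : 3 ≤ k) :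
    ∀ n, n ≤ 8*k-4 →
      cfX (Real.sqrt (DI s k)) n = ((tP s k n : ℝ) + Real.sqrt (DI s k)) / (tQ s k n) := by
  intro n
  induction n with
  | zero =>
    intro _
    rw [tP_low s k (by omega), tQ_low s k (by omega), hP0, hQ0 s hk]
    norm_num [cfX]
  | succ n ih =>
    intro hn
    have hn' : n < 8*k-4 := by omega
    have ihn := ih (by omega)
    obtain ⟨e1, e2, e3, e4, e5, e6⟩ := stepOK s k hs hk hn'
    obtain ⟨_, h2⟩ := gauss_step ihn e6 e1 e2 e3 e4 e5
    rw [cfX_succ]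
    exact h2

lemma fA (hs : 1 ≤ s) (hk : 3 ≤ k) {n : ℕ} (hn : n < 8*k-4) :
    ⌊cfX (Real.sqrt (DI s k)) n⌋ = tA s k n := by
  obtain ⟨e1, e2, e3, e4, e5, e6⟩ := stepOK s k hs hk hn
  exact (gauss_step (invX s k hs hk n (by omega)) e6 e1 e2 e3 e4 e5).1

lemma xtop (hs : 1 ≤ s) (hk : 3 ≤ k) :
    cfX (Real.sqrt (DI s k)) (8*k-4) = (c0 s k : ℝ) + Real.sqrt (DI s k) := by
  rw [invX s k hs hk (8*k-4) le_rfl, tP_top s k hk, tQ_top s k hk]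
  push_cast
  ring

lemma xtop_succ (hs : 1 ≤ s) (hk : 3 ≤ k) :
    cfX (Real.sqrt (DI s k)) (8*k-4+1) = cfX (Real.sqrt (DI s k)) 1 := by
  rw [cfX_succ, cfX_succ, xtop s k hs hk]
  have h0 : cfX (Real.sqrt (DI s k)) 0 = Real.sqrt (DI s k) := rfl
  rw [h0, add_comm ((c0 s k : ℝ)) (Real.sqrt (DI s k)), Int.floor_add_intCast,
    floorX s k hs hk]
  push_cast
  ring_nf

lemma periodX (hs : 1 ≤ s) (hk : 3 ≤ k) :
    ∀ n, 1 ≤ n → cfX (Real.sqrt (DI s k)) (n + (8*k-4)) = cfX (Real.sqrt (DI s k)) n := by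
  intro n
  induction n with
  | zero => omega
  | succ n ih =>
    intro _
    rcases Nat.eq_zero_or_pos n with rfl | hn
    · rw [show 0+1+(8*k-4) = 8*k-4+1 by omega]
      exact xtop_succ s k hs hk
    · rw [show n+1+(8*k-4) = (n+(8*k-4))+1 by omega, cfX_succ, ih hn, ← cfX_succ]

lemma shiftX {p : ℕ} (hbase : cfX (Real.sqrt (DI s k)) (1+p) = cfX (Real.sqrt (DI s k)) 1) :
    ∀ n, 1 ≤ n → cfX (Real.sqrt (DI s k)) (n + p) = cfX (Real.sqrt (DI s k)) n := by
  intro n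
  induction n with
  | zero => omega
  | succ n ih =>
    intro _
    rcases Nat.eq_zero_or_pos n with rfl | hn
    · rw [show 0+1+p = 1+p by omega]; exact hbase
    · rw [show n+1+p = (n+p)+1 by omega, cfX_succ, ih hn, ← cfX_succ]

lemma lower_bound (hs : 1 ≤ s) (hk : 3 ≤ k) {p : ℕ}
    (hp : cfPeriod (Real.sqrt (DI s k)) p) : 8*k-4 ≤ p := by
  by_contra hlt
  push_neg at hlt
  obtain ⟨hp0, hper⟩ := hp
  set X := Real.sqrt (DI s k) with hX
  have hirr : Irrational X := irrX s k hs hk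
  have h1p : cfX X (1+p) = cfX X 1 := by
    apply cf_unique (irrational_cfX hirr (1+p)) (irrational_cfX hirr 1)
    intro n
    rw [← cfX_add, ← cfX_add]
    have h := hper (n+1) (by omega)
    unfold cfA at h
    rw [show 1+p+n = (n+1)+p by omega, show 1+n = n+1 by omega]
    exact h
  have hL : cfX X p = cfX X (8*k-4) := by
    have e1 : cfX X ((8*k-4)+p) = cfX X (8*k-4) := shiftX s k h1p _ (by omega)
    have e2 : cfX X (p+(8*k-4)) = cfX X p := periodX s k hs hk p (by omega)
    rw [add_comm] at e1
    rw [← e1, e2]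
  have hinv := invX s k hs hk p (by omega)
  have heq : ((tP s k p : ℝ) + X) / (tQ s k p : ℝ) = (c0 s k : ℝ) + X := by
    rw [← hinv, hL, xtop s k hs hk]
  have hQ2 : 2 ≤ tQ s k p := tQ_two s k hs hk (by omega) (by omega)
  have hQne : ((tQ s k p : ℤ) : ℝ) ≠ 0 := by
    have : (0:ℤ) < tQ s k p := by omega
    exact_mod_cast this.ne'
  rw [div_eq_iff hQne] at heq
  have hlin : ((tQ s k p - 1 : ℤ) : ℝ) * X = ((tP s k p - c0 s k * tQ s k p : ℤ) : ℝ) := by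
    push_cast
    push_cast at heq
    nlinarith [heq]
  have hcne : ((tQ s k p - 1 : ℤ) : ℝ) ≠ 0 := by
    have : (0:ℤ) < tQ s k p - 1 := by omega
    exact_mod_cast this.ne'
  have hXval : X = ((tP s k p - c0 s k * tQ s k p : ℤ) : ℝ) / ((tQ s k p - 1 : ℤ) : ℝ) := by
    rw [eq_div_iff hcne]
    push_cast
    push_cast at hlin
    linarith [hlin]
  apply hirr
  refine ⟨((tP s k p - c0 s k * tQ s k p : ℤ) : ℚ) / ((tQ s k p - 1 : ℤ) : ℚ), ?_⟩
  rw [hXval]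
  push_cast
  ring

lemma main (hs : 1 ≤ s) (hk : 3 ≤ k) :
    0 < DI s k ∧ ¬ IsSquare (DI s k) ∧
      IsLeast {p : ℕ | cfPeriod (Real.sqrt (DI s k)) p} (8 * k - 4) := by
  refine ⟨DIpos s k hs hk, DInotsq s k hs hk, ⟨?_, ?_⟩⟩
  · refine ⟨by omega, fun n hn => ?_⟩
    unfold cfA
    rw [periodX s k hs hk n hn]
  · intro p hp
    exact lower_bound s k hs hk hp

end final
end CF13

/-- Corollary c2: for `k > 2` and
`D = ((1+2s)^k - s)^2 - 2(1+2s)^k`, `D` is a positive non-square integer and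
the fundamental period of the continued fraction of `√D` has length `8k - 4`. -/
theorem period_c2 (s k : ℕ) (hs : 0 < s) (hk : 2 < k) :
    let D : ℤ := ((1 + 2 * (s : ℤ)) ^ k - s) ^ 2 - 2 * (1 + 2 * (s : ℤ)) ^ k
    0 < D ∧ ¬ IsSquare D ∧
      IsLeast {p : ℕ | cfPeriod (Real.sqrt (D : ℝ)) p} (8 * k - 4) := by
  intro D
  exact CF13.main s k hs hk
end

section
/- Let $b, s$ be positive integers and set $r = 1 + 4bs$, $v = 2b$, $u = 1 + 4b^2 r^{2k-1}$, $x = s + b r^{2k}$, for a positive integer $k$. Then for each integer $n$ with $0 \le n \le k-1$, the matrix $\begin{pmatrix} u & r^{k-1-n} v \\ r^{k+n} v & ru - 2vx \end{pmatrix}$ equals $\begin{pmatrix} 2b r^{k-1-n} & 1 \\ 1 & 0 \end{pmatrix} \begin{pmatrix} 2b r^{k+n} & 1 \\ 1 & 0 \end{pmatrix}$. -/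
/-- the factorization of the matrices `N_n` used in the proof of
Theorem t2 (even case), with `r = 1 + 4bs`. -/
theorem Nn_factorization_t2 (b s k : ℕ) (hb : 0 < b) (hs : 0 < s) (hk : 0 < k)
    (n : ℕ) (hn : n ≤ k - 1) :
    let r : ℤ := 1 + 4 * b * s
    let v : ℤ := 2 * b
    let u : ℤ := 1 + 4 * (b : ℤ) ^ 2 * r ^ (2 * k - 1)
    let x : ℤ := s + b * r ^ (2 * k)
    (!![u, r ^ (k - 1 - n) * v; r ^ (k + n) * v, r * u - 2 * v * x] :
        Matrix (Fin 2) (Fin 2) ℤ) =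
      !![2 * (b : ℤ) * r ^ (k - 1 - n), 1; 1, 0] *
        !![2 * (b : ℤ) * r ^ (k + n), 1; 1, 0] := by
  intro r v u x
  set R : ℤ := 1 + 4 * (b : ℤ) * s with hR
  have he : (k - 1 - n) + (k + n) = 2 * k - 1 := by omega
  have h2k : 2 * k = (2 * k - 1) + 1 := by omega
  have hpow : R ^ (k - 1 - n) * R ^ (k + n) = R ^ (2 * k - 1) := by
    rw [← pow_add, he]
  have h2 : R ^ (2 * k) = R ^ (2 * k - 1) * R := by
    rw [← pow_succ, ← h2k]
  ext i j
  fin_cases i <;> fin_cases j <;>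
    simp [Matrix.mul_apply, Fin.sum_univ_succ, u, v, x, r] <;>
    (try rw [h2]) <;> (try rw [← hpow]) <;> (try rw [hR]) <;> ring
end

section
/- Let $b, s, k$ be positive integers and set $D = (b(4bs-1)^{2k+1} + s)^2 - (4bs-1)^{2k+1}$. Then $D$ is a positive non-square integer and the fundamental period of the regular continued fraction expansion of $\sqrt{D}$ has length $6k + 5$. -/

def mM (b s : ℕ) : ℤ := 4*(b:ℤ)*(s:ℤ) - 1
def mA (b s k : ℕ) : ℤ := (b:ℤ) * (mM b s)^(2*k+1) + (s:ℤ)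
def mD (b s k : ℕ) : ℤ := (mA b s k)^2 - (mM b s)^(2*k+1)

def tP (b s k r : ℕ) : ℤ :=
  if r % 3 = 0 then mA b s k - (mM b s)^(r/3)
  else if r % 3 = 1 then mA b s k - (mM b s)^(2*k+1 - r/3)
  else mA b s k - 2*(s:ℤ)

def tQ (b s k r : ℕ) : ℤ :=
  if r % 3 = 0 then 2*mA b s k - (mM b s)^(r/3) - (mM b s)^(2*k+1 - r/3)
  else if r % 3 = 1 then (mM b s)^(2*k+1 - r/3)
  else (mM b s)^(r/3 + 1)

def tA (b s k r : ℕ) : ℤ :=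
  if r = 6*k+4 then 2*mA b s k - 2
  else if r % 3 = 0 then 1
  else if r % 3 = 1 then 2*(b:ℤ)*(mM b s)^(r/3) - 1
  else 2*(b:ℤ)*(mM b s)^(2*k+1 - (r/3+1)) - 1


section Eval
variable (b s k : ℕ)

lemma tP0 {r : ℕ} (h : r % 3 = 0) :
    tP b s k r = mA b s k - (mM b s)^(r/3) := by unfold tP; rw [if_pos h]
lemma tP1 {r : ℕ} (h : r % 3 = 1) :
    tP b s k r = mA b s k - (mM b s)^(2*k+1 - r/3) := by
  unfold tP; rw [if_neg (by omega), if_pos h]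
lemma tP2 {r : ℕ} (h : r % 3 = 2) :
    tP b s k r = mA b s k - 2*(s:ℤ) := by
  unfold tP; rw [if_neg (by omega), if_neg (by omega)]
lemma tQ0 {r : ℕ} (h : r % 3 = 0) :
    tQ b s k r = 2*mA b s k - (mM b s)^(r/3) - (mM b s)^(2*k+1 - r/3) := by
  unfold tQ; rw [if_pos h]
lemma tQ1 {r : ℕ} (h : r % 3 = 1) :
    tQ b s k r = (mM b s)^(2*k+1 - r/3) := by
  unfold tQ; rw [if_neg (by omega), if_pos h]
lemma tQ2 {r : ℕ} (h : r % 3 = 2) :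
    tQ b s k r = (mM b s)^(r/3 + 1) := by
  unfold tQ; rw [if_neg (by omega), if_neg (by omega)]
lemma tA0 {r : ℕ} (h : r % 3 = 0) (hw : r ≠ 6*k+4) :
    tA b s k r = 1 := by
  unfold tA; rw [if_neg hw, if_pos h]
lemma tA1 {r : ℕ} (h : r % 3 = 1) (hw : r ≠ 6*k+4) :
    tA b s k r = 2*(b:ℤ)*(mM b s)^(r/3) - 1 := by
  unfold tA; rw [if_neg hw, if_neg (by omega), if_pos h]
lemma tA2 {r : ℕ} (h : r % 3 = 2) (hw : r ≠ 6*k+4) :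
    tA b s k r = 2*(b:ℤ)*(mM b s)^(2*k+1 - (r/3+1)) - 1 := by
  unfold tA; rw [if_neg hw, if_neg (by omega), if_neg (by omega)]
lemma tAw : tA b s k (6*k+4) = 2*mA b s k - 2 := by
  unfold tA; rw [if_pos rfl]

end Eval

section Step
variable (b s k : ℕ)

set_option maxHeartbeats 2000000 in
lemma tbl_step (hb : 0 < b) (hs : 0 < s) (r : ℕ) (hr : r < 6*k+5) :
    0 < tQ b s k r ∧
    tP b s k ((r+1) % (6*k+5)) = tA b s k r * tQ b s k r - tP b s k r ∧
    tQ b s k r * tQ b s k ((r+1) % (6*k+5))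
      = mD b s k - (tP b s k ((r+1) % (6*k+5)))^2 ∧
    0 ≤ tP b s k ((r+1) % (6*k+5)) ∧
    0 < (tA b s k r + 1) * tQ b s k r - tP b s k r ∧
    mD b s k < ((tA b s k r + 1) * tQ b s k r - tP b s k r)^2 := by
  have hb1 : (1:ℤ) ≤ (b:ℤ) := by exact_mod_cast hb
  have hs1 : (1:ℤ) ≤ (s:ℤ) := by exact_mod_cast hs
  have hMdef : mM b s = 4*(b:ℤ)*(s:ℤ) - 1 := rfl
  have hM3 : 3 ≤ mM b s := by rw [hMdef]; nlinarith
  have hM4s : 4*(s:ℤ) - 1 ≤ mM b s := by rw [hMdef]; nlinarith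
  have hM1 : (1:ℤ) ≤ mM b s := by linarith
  have hpow1 : ∀ j, (1:ℤ) ≤ (mM b s)^j := fun j => one_le_pow₀ hM1
  have hmono : ∀ i j : ℕ, i ≤ j → (mM b s)^i ≤ (mM b s)^j :=
    fun i j hij => pow_le_pow_right₀ hM1 hij
  have hz1 : (1:ℤ) ≤ (mM b s)^(2*k+1) := hpow1 _
  have hzM : mM b s ≤ (mM b s)^(2*k+1) := by
    simpa using hmono 1 (2*k+1) (by omega)
  have hAdef : mA b s k = (b:ℤ)*(mM b s)^(2*k+1) + (s:ℤ) := rfl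
  have hDdef : mD b s k = (mA b s k)^2 - (mM b s)^(2*k+1) := rfl
  have hbz : (mM b s)^(2*k+1) ≤ (b:ℤ) * (mM b s)^(2*k+1) := by nlinarith
  have hAlb : (mM b s)^(2*k+1) + 1 ≤ mA b s k := by rw [hAdef]; nlinarith
  by_cases hw : r = 6*k+4
  · -- wrap case
    subst hw
    have h1 : (6*k+4) % 3 = 1 := by omega
    have h2 : (6*k+4) / 3 = 2*k+1 := by omega
    have h3 : (6*k+4+1) % (6*k+5) = 0 := by
      rw [show 6*k+4+1 = 6*k+5 from rfl, Nat.mod_self]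
    have e0 : 2*k+1 - (6*k+4)/3 = 0 := by omega
    have e1 : (0:ℕ)/3 = 0 := rfl
    rw [h3, tP1 b s k h1, tQ1 b s k h1, tAw, tP0 b s k (by omega : 0 % 3 = 0),
      tQ0 b s k (by omega : 0 % 3 = 0), e0, e1, Nat.sub_zero, pow_zero]
    refine ⟨by linarith, by ring, by rw [hDdef]; ring, by linarith, by linarith, ?_⟩
    have hv : (2*mA b s k - 2 + 1) * 1 - (mA b s k - 1) = mA b s k := by ring
    rw [hv, hDdef]
    have hA1 : (1:ℤ) ≤ mA b s k := by linarith
    nlinarith [hA1, hz1]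
  · have h3 : r % 3 = 0 ∨ r % 3 = 1 ∨ r % 3 = 2 := by omega
    set m := r / 3 with hm
    clear_value m
    rcases h3 with h0 | h1 | h2
    · -- r ≡ 0 (mod 3)
      have hrle : r ≤ 6*k+3 := by omega
      have hmod5 : (r+1) % (6*k+5) = r+1 := Nat.mod_eq_of_lt (by omega)
      have hmod3 : (r+1) % 3 = 1 := by omega
      have hdiv : (r+1)/3 = m := by omega
      have hmN : m ≤ 2*k+1 := by omega
      rw [hmod5, tP0 b s k h0, tQ0 b s k h0, tA0 b s k h0 hw, tP1 b s k hmod3,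
        tQ1 b s k hmod3, hdiv]
      rw [← hm]
      set x := (mM b s)^m with hx
      set y := (mM b s)^(2*k+1-m) with hy
      clear_value x y
      have hxy : x * y = (mM b s)^(2*k+1) := by
        rw [hx, hy, ← pow_add]; congr 1; omega
      have hx1 : 1 ≤ x := by rw [hx]; exact hpow1 _
      have hy1 : 1 ≤ y := by rw [hy]; exact hpow1 _
      have hxle : x ≤ (mM b s)^(2*k+1) := by rw [hx]; exact hmono _ _ hmN
      have hyle : y ≤ (mM b s)^(2*k+1) := by rw [hy]; exact hmono _ _ (by omega)
      have hsum : x + y ≤ (mM b s)^(2*k+1) + 1 := by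
        nlinarith [mul_nonneg (sub_nonneg.2 hx1) (sub_nonneg.2 hy1)]
      refine ⟨by linarith, by ring, ?_, by linarith, by linarith, ?_⟩
      · rw [hDdef, ← hxy]; ring
      · rw [hDdef, ← hxy]
        have hv : mA b s k + 1 ≤ (1+1) * (2*mA b s k - x - y) - (mA b s k - x) := by
          linarith
        have hA1 : (1:ℤ) ≤ mA b s k := by linarith
        have hsq : (mA b s k + 1)^2 ≤ ((1+1) * (2*mA b s k - x - y) - (mA b s k - x))^2 :=
          pow_le_pow_left₀ (by linarith) hv 2
        have hxy1 : (1:ℤ) ≤ x * y := by rw [hxy]; exact hz1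
        have hexp : (mA b s k + 1)^2 = mA b s k^2 + 2*mA b s k + 1 := by ring
        linarith [hsq, hxy1, hA1, hexp]
    · -- r ≡ 1 (mod 3), not wrap
      have hrle : r ≤ 6*k+1 := by omega
      have hmod5 : (r+1) % (6*k+5) = r+1 := Nat.mod_eq_of_lt (by omega)
      have hmod3 : (r+1) % 3 = 2 := by omega
      have hdiv : (r+1)/3 = m := by omega
      have hmN : m ≤ 2*k := by omega
      rw [hmod5, tP1 b s k h1, tQ1 b s k h1, tA1 b s k h1 hw, tP2 b s k hmod3,
        tQ2 b s k hmod3, hdiv]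
      rw [← hm]
      set x := (mM b s)^m with hx
      set y := (mM b s)^(2*k+1-m) with hy
      clear_value x y
      have hxy : x * y = (mM b s)^(2*k+1) := by
        rw [hx, hy, ← pow_add]; congr 1; omega
      have hyM : y * (mM b s)^(m+1) = (mM b s)^(2*k+1) * mM b s := by
        rw [hy, ← pow_add, ← pow_succ]; congr 1; omega
      have hx1 : 1 ≤ x := by rw [hx]; exact hpow1 _
      have hyM1 : mM b s ≤ y := by
        rw [hy]; simpa using hmono 1 (2*k+1-m) (by omega)
      have hyle : y ≤ (mM b s)^(2*k+1) := by rw [hy]; exact hmono _ _ (by omega)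
      have hveq : (2*(b:ℤ)*x - 1 + 1) * y - (mA b s k - y) = mA b s k - 2*s + y := by
        rw [hAdef]; linear_combination (2*(b:ℤ)) * hxy
      refine ⟨by linarith, ?_, ?_, ?_, ?_, ?_⟩
      · rw [hAdef]; linear_combination (-2*(b:ℤ)) * hxy
      · rw [hDdef, hAdef]
        linear_combination hyM + ((mM b s)^(2*k+1)) * hMdef
      · rw [hAdef]; linarith [hbz, hzM, hM4s]
      · rw [hveq, hAdef]; linarith [hbz, hzM, hM4s, hyM1]
      · rw [hveq, hDdef]
        have hv2 : mA b s k + 1 ≤ mA b s k - 2*s + y := by linarith [hyM1, hM4s]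
        have hA1 : (1:ℤ) ≤ mA b s k := by linarith
        have hsq2 : (mA b s k + 1)^2 ≤ (mA b s k - 2*s + y)^2 :=
          pow_le_pow_left₀ (by linarith) hv2 2
        have hexp : (mA b s k + 1)^2 = mA b s k^2 + 2*mA b s k + 1 := by ring
        linarith [hsq2, hA1, hz1, hexp]
    · -- r ≡ 2 (mod 3)
      have hrle : r ≤ 6*k+2 := by omega
      have hmod5 : (r+1) % (6*k+5) = r+1 := Nat.mod_eq_of_lt (by omega)
      have hmod3 : (r+1) % 3 = 0 := by omega
      have hdiv : (r+1)/3 = m+1 := by omega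
      have hmN : m ≤ 2*k := by omega
      rw [hmod5, tP2 b s k h2, tQ2 b s k h2, tA2 b s k h2 hw, tP0 b s k hmod3,
        tQ0 b s k hmod3, hdiv]
      rw [← hm]
      set u := (mM b s)^(m+1) with hu
      set w := (mM b s)^(2*k+1-(m+1)) with hwdef
      clear_value u w
      have huw : u * w = (mM b s)^(2*k+1) := by
        rw [hu, hwdef, ← pow_add]; congr 1; omega
      have hw1 : 1 ≤ w := by rw [hwdef]; exact hpow1 _
      have huM : mM b s ≤ u := by
        rw [hu]; simpa using hmono 1 (m+1) (by omega)
      have hule : u ≤ (mM b s)^(2*k+1) := by rw [hu]; exact hmono _ _ (by omega)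
      have hveq : (2*(b:ℤ)*w - 1 + 1) * u - (mA b s k - 2*s) = mA b s k := by
        rw [hAdef]; linear_combination (2*(b:ℤ)) * huw
      refine ⟨by linarith, ?_, ?_, ?_, ?_, ?_⟩
      · rw [hAdef]; linear_combination (-2*(b:ℤ)) * huw
      · rw [hDdef]; linear_combination -huw
      · linarith
      · rw [hveq]; linarith
      · rw [hveq, hDdef]; linarith [hz1]
end Step
/-- Generic machinery: an integer state sequence `(P, Q, a)` satisfying the
CF recurrences computes the Gauss-map orbit of `√D`. -/
theorem cf_eq (D : ℤ) (P Q a : ℕ → ℤ)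
    (hP0 : P 0 = 0) (hQ0 : Q 0 = 1)
    (h : ∀ n, 0 < Q n ∧ P (n+1) = a n * Q n - P n ∧
      Q n * Q (n+1) = D - P (n+1)^2 ∧ 0 ≤ P (n+1) ∧
      0 < (a n + 1) * Q n - P n ∧ D < ((a n + 1) * Q n - P n)^2) :
    ∀ n, cfX (Real.sqrt D) n = (Real.sqrt D + P n) / Q n ∧
      cfA (Real.sqrt D) n = a n := by
  have hD : 0 < D := by
    obtain ⟨hQ0', h1, h2, h3, -⟩ := h 0
    nlinarith [(h 1).1, sq_nonneg (P 1)]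
  have hDR : (0:ℝ) ≤ (D:ℝ) := by positivity
  have hsq : Real.sqrt D * Real.sqrt D = (D:ℝ) := Real.mul_self_sqrt hDR
  -- floor fact
  have floor_eq : ∀ n, cfX (Real.sqrt D) n = (Real.sqrt D + P n) / Q n →
      ⌊cfX (Real.sqrt D) n⌋ = a n := by
    intro n hx
    obtain ⟨hQpos, hPrec, hQrec, hPnn, hvpos, hvsq⟩ := h n
    have hQR : (0:ℝ) < (Q n : ℝ) := by exact_mod_cast hQpos
    have hP'lt : (P (n+1) : ℝ) < Real.sqrt D := by
      have h1 : (P (n+1))^2 < D := by nlinarith [(h (n+1)).1]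
      have hx' : (0:ℝ) ≤ (P (n+1) : ℝ) := by exact_mod_cast hPnn
      have h1' : ((P (n+1) : ℝ))^2 < (D:ℝ) := by exact_mod_cast h1
      exact (Real.lt_sqrt hx').2 h1'
    have hub : Real.sqrt D < (((a n + 1) * Q n - P n : ℤ) : ℝ) := by
      have hv' : (0:ℝ) < (((a n + 1) * Q n - P n : ℤ) : ℝ) := by exact_mod_cast hvpos
      have hv2 : (D:ℝ) < (((a n + 1) * Q n - P n : ℤ) : ℝ)^2 := by exact_mod_cast hvsq
      exact (Real.sqrt_lt' hv').2 hv2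
    rw [hx, Int.floor_eq_iff]
    constructor
    · rw [le_div_iff₀ hQR]
      have : ((a n * Q n - P n : ℤ) : ℝ) < Real.sqrt D := by
        rw [← hPrec]; exact hP'lt
      push_cast at this ⊢
      linarith
    · rw [div_lt_iff₀ hQR]
      push_cast at hub ⊢
      linarith
  intro n
  induction n with
  | zero =>
    have hx : cfX (Real.sqrt D) 0 = (Real.sqrt D + P 0) / Q 0 := by
      simp [cfX, hP0, hQ0]
    exact ⟨hx, by rw [cfA]; exact floor_eq 0 hx⟩
  | succ n ih =>
    obtain ⟨hQpos, hPrec, hQrec, hPnn, hvpos, hvsq⟩ := h n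
    have hQR : (0:ℝ) < (Q n : ℝ) := by exact_mod_cast hQpos
    have hQR' : (0:ℝ) < (Q (n+1) : ℝ) := by exact_mod_cast (h (n+1)).1
    have hfl := floor_eq n ih.1
    have hP'lt : (P (n+1) : ℝ) < Real.sqrt D := by
      have h1 : (P (n+1))^2 < D := by nlinarith [(h (n+1)).1]
      have hx' : (0:ℝ) ≤ (P (n+1) : ℝ) := by exact_mod_cast hPnn
      have h1' : ((P (n+1) : ℝ))^2 < (D:ℝ) := by exact_mod_cast h1
      exact (Real.lt_sqrt hx').2 h1' 
    have hx : cfX (Real.sqrt D) (n+1) = (Real.sqrt D + P (n+1)) / Q (n+1) := by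
      show (cfX (Real.sqrt D) n - ⌊cfX (Real.sqrt D) n⌋)⁻¹ = _
      rw [hfl, ih.1]
      have hd : (Real.sqrt D + P n) / Q n - a n
          = (Real.sqrt D - P (n+1)) / Q n := by
        field_simp
        push_cast [hPrec]
        ring
      rw [hd]
      have hne : Real.sqrt D - (P (n+1):ℝ) ≠ 0 := by linarith
      rw [inv_div, div_eq_div_iff hne (ne_of_gt hQR')]
      have hcast : (Q n : ℝ) * Q (n+1) = (D : ℝ) - (P (n+1):ℝ)^2 := by exact_mod_cast hQrec
      nlinarith [hcast, hsq]
    exact ⟨hx, by rw [cfA]; exact floor_eq (n+1) hx⟩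


def sP (b s k n : ℕ) : ℤ := if n = 0 then 0 else tP b s k ((n-1) % (6*k+5))
def sQ (b s k n : ℕ) : ℤ := if n = 0 then 1 else tQ b s k ((n-1) % (6*k+5))
def sA (b s k n : ℕ) : ℤ := if n = 0 then mA b s k - 1 else tA b s k ((n-1) % (6*k+5))

section Basic
variable (b s k : ℕ)

lemma hM3' (hb : 0 < b) (hs : 0 < s) : 3 ≤ mM b s := by
  have hb1 : (1:ℤ) ≤ (b:ℤ) := by exact_mod_cast hb
  have hs1 : (1:ℤ) ≤ (s:ℤ) := by exact_mod_cast hs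
  unfold mM; nlinarith

lemma hz1' (hb : 0 < b) (hs : 0 < s) : (1:ℤ) ≤ (mM b s)^(2*k+1) :=
  one_le_pow₀ (by linarith [hM3' b s hb hs])

lemma hAlb' (hb : 0 < b) (hs : 0 < s) : (mM b s)^(2*k+1) + 1 ≤ mA b s k := by
  have hb1 : (1:ℤ) ≤ (b:ℤ) := by exact_mod_cast hb
  have hs1 : (1:ℤ) ≤ (s:ℤ) := by exact_mod_cast hs
  have := hz1' b s k hb hs
  unfold mA; nlinarith

lemma seq_step (hb : 0 < b) (hs : 0 < s) : ∀ n,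
    0 < sQ b s k n ∧
    sP b s k (n+1) = sA b s k n * sQ b s k n - sP b s k n ∧
    sQ b s k n * sQ b s k (n+1) = mD b s k - (sP b s k (n+1))^2 ∧
    0 ≤ sP b s k (n+1) ∧
    0 < (sA b s k n + 1) * sQ b s k n - sP b s k n ∧
    mD b s k < ((sA b s k n + 1) * sQ b s k n - sP b s k n)^2 := by
  have hz1 := hz1' b s k hb hs
  have hAlb := hAlb' b s k hb hs
  intro n
  cases n with
  | zero =>
    have e1 : (0:ℕ)/3 = 0 := rfl
    have eP0 : sP b s k 0 = 0 := rfl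
    have eQ0 : sQ b s k 0 = 1 := rfl
    have eA0 : sA b s k 0 = mA b s k - 1 := rfl
    have eidx : (1-1) % (6*k+5) = 0 := Nat.zero_mod _
    have eP1 : sP b s k 1 = tP b s k 0 := by rw [sP, if_neg Nat.one_ne_zero, eidx]
    have eQ1 : sQ b s k 1 = tQ b s k 0 := by rw [sQ, if_neg Nat.one_ne_zero, eidx]
    rw [eP0, eQ0, eA0, eP1, eQ1, tP0 b s k (by omega : (0:ℕ) % 3 = 0),
      tQ0 b s k (by omega : (0:ℕ) % 3 = 0), e1, Nat.sub_zero, pow_zero]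
    refine ⟨one_pos, by ring, by rw [show mD b s k = (mA b s k)^2 - (mM b s)^(2*k+1) from rfl]; ring,
      by linarith, by linarith, ?_⟩
    have hv : (mA b s k - 1 + 1) * 1 - 0 = mA b s k := by ring
    rw [hv, show mD b s k = (mA b s k)^2 - (mM b s)^(2*k+1) from rfl]
    nlinarith
  | succ j =>
    have hL : 0 < 6*k+5 := by omega
    have hr : j % (6*k+5) < 6*k+5 := Nat.mod_lt _ hL
    have hmod : (j+1) % (6*k+5) = (j % (6*k+5) + 1) % (6*k+5) := by
      conv_lhs => rw [Nat.add_mod]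
      simp [Nat.mod_eq_of_lt (show 1 < 6*k+5 by omega)]
    have := tbl_step b s k hb hs (j % (6*k+5)) hr
    simp only [sP, sQ, sA, if_neg (Nat.succ_ne_zero j),
      if_neg (Nat.succ_ne_zero (j+1)), Nat.succ_sub_one] at *
    rw [hmod]
    exact this

lemma sA_eq_cfA (hb : 0 < b) (hs : 0 < s) :
    ∀ n, cfA (Real.sqrt (mD b s k)) n = sA b s k n := by
  intro n
  exact (cf_eq (mD b s k) (sP b s k) (sQ b s k) (sA b s k)
    (by simp [sP]) (by simp [sQ]) (seq_step b s k hb hs) n).2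

lemma tA_top : tA b s k (6*k+4) = 2*mA b s k - 2 := tAw b s k

lemma tA_small (hb : 0 < b) (hs : 0 < s) (r : ℕ) (hr : r < 6*k+4) :
    tA b s k r < 2*mA b s k - 2 := by
  have hb1 : (1:ℤ) ≤ (b:ℤ) := by exact_mod_cast hb
  have hs1 : (1:ℤ) ≤ (s:ℤ) := by exact_mod_cast hs
  have hM3 := hM3' b s hb hs
  have hM1 : (1:ℤ) ≤ mM b s := by linarith
  have hz1 := hz1' b s k hb hs
  have hAlb := hAlb' b s k hb hs
  have hA2 : 2 ≤ mA b s k := by linarith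
  have hmono : ∀ i j : ℕ, i ≤ j → (mM b s)^i ≤ (mM b s)^j :=
    fun i j hij => pow_le_pow_right₀ hM1 hij
  have hAdef : mA b s k = (b:ℤ)*(mM b s)^(2*k+1) + (s:ℤ) := rfl
  have hp2k : (1:ℤ) ≤ (mM b s)^(2*k) := one_le_pow₀ hM1
  have hsucc : (mM b s)^(2*k+1) = (mM b s)^(2*k) * mM b s := pow_succ _ _
  have key : ∀ j : ℕ, j ≤ 2*k → 2*(b:ℤ)*(mM b s)^j - 1 < 2*mA b s k - 2 := by
    intro j hj
    have h1 : (mM b s)^j ≤ (mM b s)^(2*k) := hmono _ _ hj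
    have hbpos : (0:ℤ) ≤ 2*(b:ℤ) := by linarith
    have h2 : 2*(b:ℤ)*(mM b s)^j ≤ 2*(b:ℤ)*(mM b s)^(2*k) := by nlinarith
    have h3 : (mM b s)^(2*k)*3 ≤ (mM b s)^(2*k)*mM b s :=
      mul_le_mul_of_nonneg_left hM3 (by linarith)
    have h4 : 2*(b:ℤ)*((mM b s)^(2*k)*3) ≤ 2*(b:ℤ)*((mM b s)^(2*k)*mM b s) :=
      mul_le_mul_of_nonneg_left h3 hbpos
    have h5 : (1:ℤ) ≤ (b:ℤ)*(mM b s)^(2*k) := by nlinarith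
    rw [hAdef, hsucc]
    linarith [h2, h4, h5, hs1]
  have hw : r ≠ 6*k+4 := by omega
  have h3 : r % 3 = 0 ∨ r % 3 = 1 ∨ r % 3 = 2 := by omega
  rcases h3 with h | h | h
  · rw [tA0 b s k h hw]; linarith
  · rw [tA1 b s k h hw]; exact key _ (by omega)
  · rw [tA2 b s k h hw]; exact key _ (by omega)

end Basic

/-- Corollary c7: for
`D = (b(4bs-1)^{2k+1} + s)^2 - (4bs-1)^{2k+1}`, `D` is a positive non-square
integer and the fundamental period of the continued fraction of `√D` has
length `6k + 5`. -/
theorem period_c7 (b s k : ℕ) (hb : 0 < b) (hs : 0 < s) (hk : 0 < k) :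
    let D : ℤ := ((b : ℤ) * (4 * (b : ℤ) * s - 1) ^ (2 * k + 1) + s) ^ 2 -
      (4 * (b : ℤ) * s - 1) ^ (2 * k + 1)
    0 < D ∧ ¬ IsSquare D ∧
      IsLeast {p : ℕ | cfPeriod (Real.sqrt (D : ℝ)) p} (6 * k + 5) := by
  intro D
  have hDeq : D = mD b s k := rfl
  have hz1 := hz1' b s k hb hs
  have hAlb := hAlb' b s k hb hs
  have hA1 : (1:ℤ) ≤ mA b s k := by linarith
  have hDdef : mD b s k = (mA b s k)^2 - (mM b s)^(2*k+1) := rfl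
  have hDpos : 0 < mD b s k := by rw [hDdef]; nlinarith
  have hlow : (mA b s k - 1)^2 < mD b s k := by rw [hDdef]; nlinarith
  have hhigh : mD b s k < (mA b s k)^2 := by rw [hDdef]; linarith
  have hnsq : ¬ IsSquare (mD b s k) := by
    rintro ⟨t, ht⟩
    have h1 : (mA b s k - 1)^2 < t*t := by rw [← ht]; exact hlow
    have h2 : t*t < (mA b s k)^2 := by rw [← ht]; exact hhigh
    have habs : |t| * |t| = t*t := abs_mul_abs_self t
    have h3 : |t| < mA b s k := by
      by_contra hcon
      push_neg at hcon
      nlinarith [abs_nonneg t]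
    have h4 : |t| ≤ mA b s k - 1 := by omega
    nlinarith [abs_nonneg t]
  have hval := sA_eq_cfA b s k hb hs
  rw [hDeq]
  refine ⟨hDpos, hnsq, ?_, ?_⟩
  · -- membership
    refine ⟨by omega, fun n hn => ?_⟩
    rw [hval, hval]
    simp only [sA, if_neg (by omega : ¬ n + (6*k+5) = 0), if_neg (by omega : ¬ n = 0)]
    congr 1
    have h : n + (6*k+5) - 1 = (n-1) + (6*k+5) := by omega
    rw [h, Nat.add_mod_right]
  · -- lower bound
    intro p hp
    by_contra hcon
    push_neg at hcon
    obtain ⟨hp0, hper⟩ := hp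
    have h := hper (6*k+5) (by omega)
    rw [hval, hval] at h
    have e1 : sA b s k (6*k+5) = 2*mA b s k - 2 := by
      rw [sA, if_neg (by omega : ¬ 6*k+5 = 0)]
      have : (6*k+5-1) % (6*k+5) = 6*k+4 := Nat.mod_eq_of_lt (by omega)
      rw [this, tAw]
    have e2 : sA b s k (6*k+5+p) = tA b s k (p-1) := by
      rw [sA, if_neg (by omega : ¬ 6*k+5+p = 0)]
      have h2 : 6*k+5+p-1 = (p-1) + (6*k+5) := by omega
      rw [h2, Nat.add_mod_right, Nat.mod_eq_of_lt (by omega)]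
    have hsmall := tA_small b s k hb hs (p-1) (by omega)
    rw [e2, e1] at h
    linarith
end
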